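/- Let B ⊆ A × S be the behavior of a tail-biting trellis realization of a code C (so C is the projection of B onto A). Suppose the realization is unobservable, i.e., there exists a nonzero s ∈ S with (0, s) ∈ B. Fix an index i with s_i ≠ 0 and a subspace T_i of S_i with T_i ⊕ span(s_i) = S_i. Then the projection onto A of B' = {(a, t) ∈ B : t_i ∈ T_i} still equals C. -/

import Mathlib

open Module

/-- The behavior of a tail-biting trellis realization with state spaces `S i`, symbol
spaces `A i` (`i ∈ ℤ/m`), and constraint codes `C i ⊆ S i × A i × S (i+1)`: the subspace of
all pairs `(a, s)` of symbol/state sequences satisfying all local constraints. -/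
def trellisBehavior {F : Type*} [Field F] {m : ℕ} (S A : ZMod m → Type*)
    [∀ i, AddCommGroup (S i)] [∀ i, Module F (S i)]
    [∀ i, AddCommGroup (A i)] [∀ i, Module F (A i)]
    (C : ∀ i, Submodule F (S i × A i × S (i + 1))) :
    Submodule F ((∀ i, A i) × (∀ i, S i)) where
  carrier := {p | ∀ i, (p.2 i, p.1 i, p.2 (i + 1)) ∈ C i}
  zero_mem' := by intro i; exact (C i).zero_mem
  add_mem' := by intro p q hp hq i; exact (C i).add_mem (hp i) (hq i)
  smul_mem' := by intro r p hp i; exact (C i).smul_mem r (hp i)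

/-- Suppose a tail-biting trellis realization is unobservable, witnessed by a nonzero state
sequence `s` with `(0, s)` in the behavior `B`. Fix `i` with `s i ≠ 0` and a subspace
`Ti ⊆ S i` with `Ti ⊕ span(s i) = S i`. Then the projection onto the symbol space of the
trimmed behavior `B' = {(a, t) ∈ B : t i ∈ Ti}` still equals the code generated. -/
theorem trim_unobservable_same_code
    {F : Type*} [Field F] [Fintype F] {m : ℕ}
    (S A : ZMod m → Type*)
    [∀ i, AddCommGroup (S i)] [∀ i, Module F (S i)] [∀ i, FiniteDimensional F (S i)]
    [∀ i, AddCommGroup (A i)] [∀ i, Module F (A i)] [∀ i, FiniteDimensional F (A i)]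
    (C : ∀ i, Submodule F (S i × A i × S (i + 1)))
    (s : ∀ j, S j) (hs : s ≠ 0)
    (hsB : ((0 : ∀ j, A j), s) ∈ trellisBehavior S A C)
    (i : ZMod m) (hsi : s i ≠ 0)
    (Ti : Submodule F (S i)) (hTi : IsCompl Ti (Submodule.span F {s i})) :
    ∀ a : ∀ j, A j,
      (∃ t, (a, t) ∈ trellisBehavior S A C ∧ t i ∈ Ti) ↔
        (∃ t, (a, t) ∈ trellisBehavior S A C) := by
  intro a
  constructor
  · rintro ⟨t, ht, -⟩; exact ⟨t, ht⟩
  · rintro ⟨t, ht⟩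
    obtain ⟨u, v, hu, hv, huv⟩ := Submodule.codisjoint_iff_exists_add_eq.mp hTi.codisjoint (t i)
    obtain ⟨c, hc⟩ := Submodule.mem_span_singleton.mp hv
    refine ⟨t - c • s, ?_, ?_⟩
    · have := (trellisBehavior S A C).sub_mem ht ((trellisBehavior S A C).smul_mem c hsB)
      simpa using this
    · have : (t - c • s) i = u := by
        simp only [Pi.sub_apply, Pi.smul_apply]
        rw [hc, ← huv]
        abel
      rw [this]; exact hu
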